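/- Let g>0, θ∈ℝ, γ>1, k>0, ρ₀>0 be constants, S, Z : ℝ→ℝ C¹ functions, and I₁, I₂, h_w given C¹ functions (the hydrostatic pressure term, the pressure source term, and the water height). Suppose M, A, Q : ℝ×ℝ→ℝ are C¹ with M>0, A>0, S−A>0, that the water-layer equations ∂ₜA+∂ₓQ=0 and ∂ₜQ+∂ₓ( Q²/A + g I₁ cosθ + A·M c_a²/(γ(S−A)) ) = −gA∂ₓZ + g I₂ cosθ + (M c_a²/(γ(S−A)))·∂ₓA hold with c_a² = kγ(ρ₀M/(S−A))^{γ−1}, and that the geometric Leibniz identity ∂ₓ[I₁(t,x)] = I₂(t,x) + A(t,x)·∂ₓ[h_w(t,x)] holds. Then the water velocity u = Q/A satisfies ∂ₜu + ∂ₓ( u²/2 + g h_w cosθ + gZ + M c_a²/(γ(S−A)) ) = 0. -/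

import Mathlib

open Real MeasureTheory

/-- Partial derivative with respect to the first (time) variable. -/
noncomputable def pt (f : ℝ → ℝ → ℝ) (t x : ℝ) : ℝ := deriv (fun s => f s x) t

/-- Partial derivative with respect to the second (space) variable. -/
noncomputable def px (f : ℝ → ℝ → ℝ) (t x : ℝ) : ℝ := deriv (fun y => f t y) x

/-- Auxiliary: the explicit air-pressure term `M c_a²/(γ(S-A))`. -/
noncomputable def Pfun (k γ ρ₀ : ℝ) (S : ℝ → ℝ) (M A : ℝ → ℝ → ℝ) (t x : ℝ) : ℝ :=
  M t x * (k * γ * (ρ₀ * M t x / (S x - A t x)) ^ (γ - 1)) / (γ * (S x - A t x))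

lemma diffx {f : ℝ → ℝ → ℝ} (hf : ContDiff ℝ 1 (Function.uncurry f)) (t x : ℝ) :
    DifferentiableAt ℝ (fun y => f t y) x := by
  have h := (hf.differentiable one_ne_zero) (t, x)
  exact h.comp x ((differentiableAt_const t).prodMk differentiableAt_id)

lemma difft {f : ℝ → ℝ → ℝ} (hf : ContDiff ℝ 1 (Function.uncurry f)) (t x : ℝ) :
    DifferentiableAt ℝ (fun s => f s x) t := by
  have h := (hf.differentiable one_ne_zero) (t, x)
  exact DifferentiableAt.comp (f := fun s => (s, x)) t h (differentiableAt_id.prodMk (differentiableAt_const x))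

/-- for C¹ solutions of the water-layer equations (with the
geometric Leibniz identity `∂ₓ I₁ = I₂ + A ∂ₓ h_w`), the water velocity
`u = Q/A` satisfies
`∂ₜ u + ∂ₓ (u²/2 + g h_w cos θ + g Z + M c_a²/(γ(S-A))) = 0`. -/
theorem water_velocity_transport
    (g θ γ k ρ₀ : ℝ) (hg : 0 < g) (hγ : 1 < γ) (hk : 0 < k) (hρ₀ : 0 < ρ₀)
    (S Z : ℝ → ℝ) (hSreg : ContDiff ℝ 1 S) (hZreg : ContDiff ℝ 1 Z)
    (I₁ I₂ hw : ℝ → ℝ → ℝ)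
    (hI₁reg : ContDiff ℝ 1 (Function.uncurry I₁))
    (hI₂reg : ContDiff ℝ 1 (Function.uncurry I₂))
    (hhwreg : ContDiff ℝ 1 (Function.uncurry hw))
    (M A Q : ℝ → ℝ → ℝ)
    (hMreg : ContDiff ℝ 1 (Function.uncurry M))
    (hAreg : ContDiff ℝ 1 (Function.uncurry A))
    (hQreg : ContDiff ℝ 1 (Function.uncurry Q))
    (hMpos : ∀ t x, 0 < M t x) (hApos : ∀ t x, 0 < A t x)
    (hSA : ∀ t x, 0 < S x - A t x)
    (ca2 : ℝ → ℝ → ℝ)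
    (hca2 : ∀ t x, ca2 t x = k * γ * (ρ₀ * M t x / (S x - A t x)) ^ (γ - 1))
    (hmass : ∀ t x, pt A t x + px Q t x = 0)
    (hmom : ∀ t x,
      pt Q t x + px (fun t x => Q t x ^ 2 / A t x + g * I₁ t x * Real.cos θ
          + A t x * (M t x * ca2 t x / (γ * (S x - A t x)))) t x
        = -g * A t x * deriv Z x + g * I₂ t x * Real.cos θ
          + M t x * ca2 t x / (γ * (S x - A t x)) * px A t x)
    (hLeibniz : ∀ t x, px I₁ t x = I₂ t x + A t x * px hw t x)
    (u : ℝ → ℝ → ℝ) (hu : ∀ t x, u t x = Q t x / A t x) :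
    ∀ t x, pt u t x
        + px (fun t x => u t x ^ 2 / 2 + g * hw t x * Real.cos θ + g * Z x
            + M t x * ca2 t x / (γ * (S x - A t x))) t x = 0 := by
  intro t x
  have ha : A t x ≠ 0 := (hApos t x).ne'
  have hSAne : S x - A t x ≠ 0 := (hSA t x).ne'
  have hγ0 : γ ≠ 0 := by positivity
  have hden : γ * (S x - A t x) ≠ 0 := mul_ne_zero hγ0 hSAne
  have hb : (0:ℝ) < ρ₀ * M t x / (S x - A t x) :=
    div_pos (mul_pos hρ₀ (hMpos t x)) (hSA t x)
  -- basic HasDerivAt facts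
  have HQ : HasDerivAt (fun y => Q t y) (px Q t x) x := (diffx hQreg t x).hasDerivAt
  have HA : HasDerivAt (fun y => A t y) (px A t x) x := (diffx hAreg t x).hasDerivAt
  have HM : HasDerivAt (fun y => M t y) (px M t x) x := (diffx hMreg t x).hasDerivAt
  have HI₁ : HasDerivAt (fun y => I₁ t y) (px I₁ t x) x := (diffx hI₁reg t x).hasDerivAt
  have Hhw : HasDerivAt (fun y => hw t y) (px hw t x) x := (diffx hhwreg t x).hasDerivAt
  have HS : HasDerivAt S (deriv S x) x := ((hSreg.differentiable one_ne_zero) x).hasDerivAt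
  have HZ : HasDerivAt Z (deriv Z x) x := ((hZreg.differentiable one_ne_zero) x).hasDerivAt
  have HQt : HasDerivAt (fun s => Q s x) (pt Q t x) t := (difft hQreg t x).hasDerivAt
  have HAt : HasDerivAt (fun s => A s x) (pt A t x) t := (difft hAreg t x).hasDerivAt
  -- the pressure term is differentiable in x
  have HSA' : HasDerivAt (fun y => S y - A t y) (deriv S x - px A t x) x := HS.sub HA
  have Hbase : HasDerivAt (fun y => ρ₀ * M t y / (S y - A t y))
      ((ρ₀ * px M t x * (S x - A t x) - ρ₀ * M t x * (deriv S x - px A t x))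
        / (S x - A t x) ^ 2) x := (HM.const_mul ρ₀).div HSA' hSAne
  have HR := Hbase.rpow_const (p := γ - 1) (Or.inl hb.ne')
  have HPraw := (HM.mul (HR.const_mul (k * γ))).div (HSA'.const_mul γ) hden
  have hPdiff : DifferentiableAt ℝ (fun y => Pfun k γ ρ₀ S M A t y) x :=
    HPraw.differentiableAt
  have HP : HasDerivAt (fun y => Pfun k γ ρ₀ S M A t y)
      (px (Pfun k γ ρ₀ S M A) t x) x := hPdiff.hasDerivAt
  -- time derivative of u
  have e_pt : pt u t x = (pt Q t x * A t x - Q t x * pt A t x) / A t x ^ 2 := by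
    have hfun : (fun s => u s x) = fun s => Q s x / A s x := funext fun s => hu s x
    show deriv (fun s => u s x) t = _
    rw [hfun]
    exact (HQt.div HAt ha).deriv
  -- spatial derivative in the momentum equation
  have e2 : px (fun t x => Q t x ^ 2 / A t x + g * I₁ t x * Real.cos θ
          + A t x * (M t x * ca2 t x / (γ * (S x - A t x)))) t x
      = (2 * Q t x * px Q t x * A t x - Q t x ^ 2 * px A t x) / A t x ^ 2
        + g * px I₁ t x * Real.cos θ
        + (px A t x * Pfun k γ ρ₀ S M A t x
            + A t x * px (Pfun k γ ρ₀ S M A) t x) := by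
    have hfe : (fun y => Q t y ^ 2 / A t y + g * I₁ t y * Real.cos θ
          + A t y * (M t y * ca2 t y / (γ * (S y - A t y))))
        = fun y => Q t y ^ 2 / A t y + g * I₁ t y * Real.cos θ
          + A t y * Pfun k γ ρ₀ S M A t y := by
      funext y; rw [hca2]; rfl
    show deriv (fun y => Q t y ^ 2 / A t y + g * I₁ t y * Real.cos θ
          + A t y * (M t y * ca2 t y / (γ * (S y - A t y)))) x = _
    rw [hfe]; refine Eq.trans ((((HQ.pow 2).div HA ha).add
      ((HI₁.const_mul g).mul_const (Real.cos θ))).add (HA.mul HP)).deriv ?_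
    simp only [Pi.pow_apply, Pi.div_apply]
    push_cast
    ring
  -- spatial derivative in the goal
  have e_tgt : px (fun t x => u t x ^ 2 / 2 + g * hw t x * Real.cos θ + g * Z x
            + M t x * ca2 t x / (γ * (S x - A t x))) t x
      = 2 * (Q t x / A t x)
          * ((px Q t x * A t x - Q t x * px A t x) / A t x ^ 2) / 2
        + g * px hw t x * Real.cos θ + g * deriv Z x
        + px (Pfun k γ ρ₀ S M A) t x := by
    have hfe : (fun y => u t y ^ 2 / 2 + g * hw t y * Real.cos θ + g * Z y
          + M t y * ca2 t y / (γ * (S y - A t y)))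
        = fun y => (Q t y / A t y) ^ 2 / 2 + g * hw t y * Real.cos θ + g * Z y
          + Pfun k γ ρ₀ S M A t y := by
      funext y; rw [hu, hca2]; rfl
    show deriv (fun y => u t y ^ 2 / 2 + g * hw t y * Real.cos θ + g * Z y
          + M t y * ca2 t y / (γ * (S y - A t y))) x = _
    rw [hfe]; refine Eq.trans ((((((HQ.div HA ha).pow 2).div_const 2).add
      ((Hhw.const_mul g).mul_const (Real.cos θ))).add (HZ.const_mul g)).add HP
      |>.deriv) ?_
    simp only [Pi.pow_apply, Pi.div_apply]
    push_cast
    ring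
  -- assemble
  have hmomtx := hmom t x
  rw [e2] at hmomtx
  have hP_eq : M t x * ca2 t x / (γ * (S x - A t x)) = Pfun k γ ρ₀ S M A t x := by
    rw [hca2]; rfl
  rw [hP_eq] at hmomtx
  have htA : pt A t x = -px Q t x := by linarith [hmass t x]
  have hdI : px I₁ t x = I₂ t x + A t x * px hw t x := hLeibniz t x
  have htQ : pt Q t x = (-g * A t x * deriv Z x + g * I₂ t x * Real.cos θ
      + Pfun k γ ρ₀ S M A t x * px A t x)
      - ((2 * Q t x * px Q t x * A t x - Q t x ^ 2 * px A t x) / A t x ^ 2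
        + g * (I₂ t x + A t x * px hw t x) * Real.cos θ
        + (px A t x * Pfun k γ ρ₀ S M A t x
            + A t x * px (Pfun k γ ρ₀ S M A) t x)) := by
    rw [← hdI]; linarith [hmomtx]
  rw [e_pt, e_tgt, htQ, htA]
  field_simp
  ring
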